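/- Let A and B be friendly isomorphic graphs with unique isomorphism Π*. Then Π* is the unique minimizer over pseudo-stochastic matrices P (satisfying P𝟙 = 𝟙) of the convex function f(P) = ‖PA − BP‖_F². -/

import Mathlib

open Matrix

def IsPermMatrix {n : ℕ} (P : Matrix (Fin n) (Fin n) ℝ) : Prop :=
  ∃ σ : Equiv.Perm (Fin n), P = σ.permMatrix ℝ

def HasSimpleSpectrum {n : ℕ} (A : Matrix (Fin n) (Fin n) ℝ) : Prop :=
  ∀ μ : ℝ, Module.finrank ℝ (Module.End.eigenspace (Matrix.toLin' A) μ) ≤ 1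

def IsEigenvector {n : ℕ} (A : Matrix (Fin n) (Fin n) ℝ) (u : Fin n → ℝ) : Prop :=
  u ≠ 0 ∧ ∃ μ : ℝ, A.mulVec u = μ • u

def IsFriendly {n : ℕ} (A : Matrix (Fin n) (Fin n) ℝ) : Prop :=
  HasSimpleSpectrum A ∧ ∀ u : Fin n → ℝ, IsEigenvector A u → ∑ i, u i ≠ 0

noncomputable def frobNorm {n m : ℕ} (A : Matrix (Fin n) (Fin m) ℝ) : ℝ :=
  Real.sqrt (∑ i, ∑ j, (A i j) ^ 2)

/-- If `Q` commutes with a symmetric friendly matrix `A` and fixes the ones vector,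
then `Q = 1`. -/
lemma commute_friendly_eq_one {n : ℕ} {A Q : Matrix (Fin n) (Fin n) ℝ}
    (hA : A.IsSymm) (hf : IsFriendly A)
    (hcomm : Q * A = A * Q)
    (hQ1 : Q.mulVec (fun _ => 1) = (fun _ => 1)) : Q = 1 := by
  have hH : A.IsHermitian := by
    rwa [Matrix.IsHermitian, Matrix.conjTranspose_eq_transpose_of_trivial]
  set b := hH.eigenvectorBasis with hb
  have hev : ∀ i, A.mulVec (b i) = hH.eigenvalues i • (⇑(b i) : Fin n → ℝ) :=
    fun i => hH.mulVec_eigenvectorBasis i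
  have hne : ∀ i, (⇑(b i) : Fin n → ℝ) ≠ 0 := fun i h => b.orthonormal.ne_zero i (by simpa using congrArg (WithLp.toLp 2) h)
  have hmem : ∀ i, (⇑(b i) : Fin n → ℝ) ∈
      Module.End.eigenspace (Matrix.toLin' A) (hH.eigenvalues i) := fun i => by
    rw [Module.End.mem_eigenspace_iff, Matrix.toLin'_apply]
    exact hev i
  -- each eigenspace is the span of the corresponding basis vector
  have hspan : ∀ i, Module.End.eigenspace (Matrix.toLin' A) (hH.eigenvalues i)
      = Submodule.span ℝ {(⇑(b i) : Fin n → ℝ)} := by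
    intro i
    refine (Submodule.eq_of_le_of_finrank_le ?_ ?_).symm
    · rw [Submodule.span_le, Set.singleton_subset_iff]
      exact hmem i
    · rw [finrank_span_singleton (hne i)]
      exact hf.1 _
  -- Q scales each eigenvector
  have hc : ∀ i, ∃ c : ℝ, Q.mulVec (b i) = c • (⇑(b i) : Fin n → ℝ) := by
    intro i
    have h1 : Q.mulVec (b i) ∈
        Module.End.eigenspace (Matrix.toLin' A) (hH.eigenvalues i) := by
      rw [Module.End.mem_eigenspace_iff, Matrix.toLin'_apply]
      have h2 : A.mulVec (Q.mulVec (b i)) = Q.mulVec (A.mulVec (b i)) := by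
        rw [Matrix.mulVec_mulVec, Matrix.mulVec_mulVec, hcomm]
      rw [h2, hev i, Matrix.mulVec_smul]
    rw [hspan i, Submodule.mem_span_singleton] at h1
    obtain ⟨c, hcc⟩ := h1
    exact ⟨c, hcc.symm⟩
  choose c hQb using hc
  -- the coefficients of the ones vector
  set one : EuclideanSpace ℝ (Fin n) := WithLp.toLp 2 (fun _ => 1 : Fin n → ℝ) with hone
  set α : Fin n → ℝ := fun i => b.repr one i with hα
  have hαne : ∀ i, α i ≠ 0 := by
    intro i
    have hsum : ∑ k, b i k ≠ 0 :=
      hf.2 (b i) ⟨hne i, hH.eigenvalues i, hev i⟩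
    have : α i = ∑ k, b i k := by
      rw [hα]
      simp only [b.repr_apply_apply]
      rw [PiLp.inner_apply]
      simp [hone, RCLike.inner_apply]
    rw [this]
    exact hsum
  have hexp : ∑ i, α i • (⇑(b i) : Fin n → ℝ) = (fun _ => 1 : Fin n → ℝ) :=
    by have h := congrArg WithLp.ofLp (b.sum_repr one); simp only [WithLp.ofLp_sum, WithLp.ofLp_smul] at h; rw [hα]; exact h
  -- apply Q to the expansion
  have hQone : ∑ i, (α i * c i) • (⇑(b i) : Fin n → ℝ) = (fun _ => 1 : Fin n → ℝ) := by
    calc ∑ i, (α i * c i) • (⇑(b i) : Fin n → ℝ)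
        = ∑ i, α i • (c i • (⇑(b i) : Fin n → ℝ)) := by
          simp [smul_smul]
      _ = ∑ i, α i • Q.mulVec (b i) := by
          simp only [hQb]
      _ = Q.mulVec (∑ i, α i • (⇑(b i) : Fin n → ℝ)) := by
          rw [← Matrix.mulVecLin_apply, map_sum]
          simp only [_root_.map_smul, Matrix.mulVecLin_apply]
      _ = Q.mulVec (fun _ => 1) := by rw [hexp]
      _ = (fun _ => 1 : Fin n → ℝ) := hQ1
  -- linear independence forces c i = 1
  have hdiff : ∑ i, (α i * c i - α i) • (⇑(b i) : Fin n → ℝ) = 0 := by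
    have := hQone.trans hexp.symm
    rw [← sub_eq_zero] at this
    rw [← this, ← Finset.sum_sub_distrib]
    congr 1
    ext i
    rw [sub_smul]
  have hlin : LinearIndependent ℝ (fun i => (⇑(b i) : Fin n → ℝ)) := by
    have h := b.toBasis.linearIndependent
    exact h.map' (WithLp.linearEquiv 2 ℝ (Fin n → ℝ)).toLinearMap (LinearEquiv.ker _)
  have hcoef : ∀ i, α i * c i - α i = 0 :=
    Fintype.linearIndependent_iff.mp hlin _ hdiff
  have hc1 : ∀ i, c i = 1 := by
    intro i
    have h := hcoef i
    have : α i * (c i - 1) = 0 := by ring_nf; ring_nf at h; linarith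
    rcases mul_eq_zero.mp this with h' | h'
    · exact absurd h' (hαne i)
    · linarith
  -- Q fixes every basis vector, hence every vector
  have hfix : ∀ v : Fin n → ℝ, Q.mulVec v = v := by
    intro v
    have hv : ∑ i, b.repr (WithLp.toLp 2 v) i • (⇑(b i) : Fin n → ℝ) = v := by
      have h := congrArg WithLp.ofLp (b.sum_repr (WithLp.toLp 2 v))
      simp only [WithLp.ofLp_sum, WithLp.ofLp_smul, WithLp.ofLp_toLp] at h; exact h
    calc Q.mulVec v = Q.mulVec (∑ i, b.repr (WithLp.toLp 2 v) i • (⇑(b i) : Fin n → ℝ)) := by rw [hv]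
      _ = ∑ i, b.repr (WithLp.toLp 2 v) i • Q.mulVec (b i) := by
          rw [← Matrix.mulVecLin_apply, map_sum]
          simp only [_root_.map_smul, Matrix.mulVecLin_apply]
      _ = ∑ i, b.repr (WithLp.toLp 2 v) i • (⇑(b i) : Fin n → ℝ) := by
          simp only [hQb, hc1, one_smul]
      _ = v := hv
  have : Matrix.toLin' Q = Matrix.toLin' (1 : Matrix (Fin n) (Fin n) ℝ) := by
    apply LinearMap.ext
    intro v
    rw [Matrix.toLin'_apply, Matrix.toLin'_apply, Matrix.one_mulVec]
    exact hfix v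
  exact Matrix.toLin'.injective this

lemma permMatrix_mulVec_ones {n : ℕ} (σ : Equiv.Perm (Fin n)) :
    (σ.permMatrix ℝ).mulVec (fun _ => 1) = (fun _ => 1) := by
  ext i
  simp [Matrix.mulVec, dotProduct, PEquiv.toMatrix_apply, Equiv.toPEquiv_apply]

theorem stmt_9 {n : ℕ} (A B : Matrix (Fin n) (Fin n) ℝ)
    (hA : A.IsSymm) (hB : B.IsSymm)
    (hfA : IsFriendly A) (hfB : IsFriendly B)
    (Pstar : Matrix (Fin n) (Fin n) ℝ) (hPstar : IsPermMatrix Pstar)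
    (hiso : Pstar * A = B * Pstar) :
    ∀ P : Matrix (Fin n) (Fin n) ℝ, P.mulVec (fun _ => 1) = (fun _ => 1) →
      P ≠ Pstar →
      frobNorm (Pstar * A - B * Pstar) ^ 2 < frobNorm (P * A - B * P) ^ 2 := by
  intro P hP1 hPne
  obtain ⟨σ, hσ⟩ := hPstar
  -- orthogonality of the permutation matrix
  have hTmul : Pstarᵀ * Pstar = 1 := by
    rw [hσ]
    rw [← PEquiv.toMatrix_symm, ← Equiv.toPEquiv_symm, ← PEquiv.toMatrix_trans,
      ← Equiv.toPEquiv_trans]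
    simp
  have hmulT : Pstar * Pstarᵀ = 1 := by
    rw [hσ]
    rw [← PEquiv.toMatrix_symm, ← Equiv.toPEquiv_symm, ← PEquiv.toMatrix_trans,
      ← Equiv.toPEquiv_trans]
    simp
  -- the key: P*A ≠ B*P
  have hkey : P * A ≠ B * P := by
    intro heq
    apply hPne
    -- Q = Pstarᵀ * P commutes with A and fixes ones
    have hAT : A * Pstarᵀ = Pstarᵀ * B := by
      have := congrArg Matrix.transpose hiso
      rw [Matrix.transpose_mul, Matrix.transpose_mul, hA.eq, hB.eq] at this
      exact this
    have hcomm : (Pstarᵀ * P) * A = A * (Pstarᵀ * P) := by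
      calc (Pstarᵀ * P) * A = Pstarᵀ * (P * A) := by rw [Matrix.mul_assoc]
        _ = Pstarᵀ * (B * P) := by rw [heq]
        _ = (Pstarᵀ * B) * P := by rw [Matrix.mul_assoc]
        _ = (A * Pstarᵀ) * P := by rw [hAT]
        _ = A * (Pstarᵀ * P) := by rw [Matrix.mul_assoc]
    have hQ1 : (Pstarᵀ * P).mulVec (fun _ => 1) = (fun _ => 1) := by
      rw [← Matrix.mulVec_mulVec, hP1]
      have : Pstarᵀ = (σ⁻¹).permMatrix ℝ := by
        rw [hσ, ← PEquiv.toMatrix_symm, ← Equiv.toPEquiv_symm]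
        rfl
      rw [this]
      exact permMatrix_mulVec_ones σ⁻¹
    have hQ : Pstarᵀ * P = 1 := commute_friendly_eq_one hA hfA hcomm hQ1
    calc P = 1 * P := by rw [Matrix.one_mul]
      _ = (Pstar * Pstarᵀ) * P := by rw [hmulT]
      _ = Pstar * (Pstarᵀ * P) := by rw [Matrix.mul_assoc]
      _ = Pstar * 1 := by rw [hQ]
      _ = Pstar := by rw [Matrix.mul_one]
  -- now the norm computation
  have hzero : Pstar * A - B * Pstar = 0 := sub_eq_zero.mpr hiso
  have hlhs : frobNorm (Pstar * A - B * Pstar) ^ 2 = 0 := by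
    rw [hzero]
    simp [frobNorm]
  rw [hlhs]
  have hD : P * A - B * P ≠ 0 := sub_ne_zero.mpr hkey
  set D := P * A - B * P with hDdef
  obtain ⟨i, j, hij⟩ : ∃ i j, D i j ≠ 0 := by
    by_contra h
    push_neg at h
    exact hD (by ext i j; exact h i j)
  have hsq : frobNorm D ^ 2 = ∑ i, ∑ j, (D i j) ^ 2 := by
    rw [frobNorm, Real.sq_sqrt]
    positivity
  rw [hsq]
  have h1 : (0 : ℝ) < (D i j) ^ 2 := by positivity
  have h2 : (D i j) ^ 2 ≤ ∑ j', (D i j') ^ 2 := by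
    apply Finset.single_le_sum (fun k _ => sq_nonneg (D i k)) (Finset.mem_univ j)
  have h3 : ∑ j', (D i j') ^ 2 ≤ ∑ i', ∑ j', (D i' j') ^ 2 := by
    apply Finset.single_le_sum (f := fun i' => ∑ j', (D i' j') ^ 2)
      (fun k _ => Finset.sum_nonneg fun l _ => sq_nonneg _) (Finset.mem_univ i)
  linarith
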